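/- Let a, f ∈ [0,1] and x ∈ (|a−f|, √((1−a)f) + √(a(1−f))). Then there exist real numbers d, e with e² ≤ (1−a)f and d² ≤ a(1−f) such that the matrix Q = [[a,0,0,d],[0,1−a,e,0],[0,e,f,0],[d,0,0,1−f]] is positive semidefinite and max(|d+e|, |d−e|, |a−f|) = x. Consequently, for every such x there is a qubit channel over the classical channel (a,f) whose trace-distance contraction coefficient equals x. -/

import Mathlib

open Real

lemma quad_aux (p q r u v : ℝ) (hp : 0 ≤ p) (hq : 0 ≤ q) (hr : r ^ 2 ≤ p * q) :
    0 ≤ p * u ^ 2 + 2 * r * u * v + q * v ^ 2 := by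
  rcases eq_or_lt_of_le hp with h | h
  · have hr0 : r = 0 := by nlinarith [sq_nonneg r]
    subst hr0
    rw [← h]
    have := mul_nonneg hq (sq_nonneg v)
    nlinarith
  · nlinarith [sq_nonneg (p * u + r * v), sq_nonneg v, h, mul_nonneg h.le (sq_nonneg v)]

/-- For `a, f ∈ [0,1]` and any `x ∈ (|a-f|, √((1-a)f) + √(a(1-f)))` there exist `d, e ∈ ℝ`
with `e² ≤ (1-a)f` and `d² ≤ a(1-f)` such that the Choi matrix
`[[a,0,0,d],[0,1-a,e,0],[0,e,f,0],[d,0,0,1-f]]` is positive semidefinite and the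
trace-distance contraction coefficient `max(|d+e|, |d-e|, |a-f|)` of the corresponding
qubit channel equals `x`. -/
theorem stmt_19 (a f : ℝ) (ha : a ∈ Set.Icc (0 : ℝ) 1) (hf : f ∈ Set.Icc (0 : ℝ) 1)
    (x : ℝ) (hx : x ∈ Set.Ioo |a - f| (Real.sqrt ((1 - a) * f) + Real.sqrt (a * (1 - f)))) :
    ∃ d e : ℝ, e ^ 2 ≤ (1 - a) * f ∧ d ^ 2 ≤ a * (1 - f) ∧
      (!![a, 0, 0, d;
          0, 1 - a, e, 0;
          0, e, f, 0;
          d, 0, 0, 1 - f]).PosSemidef ∧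
      max (max |d + e| |d - e|) |a - f| = x := by
  obtain ⟨ha0, ha1⟩ := ha
  obtain ⟨hf0, hf1⟩ := hf
  obtain ⟨hx1, hx2⟩ := hx
  set s := Real.sqrt ((1 - a) * f) with hs
  set t := Real.sqrt (a * (1 - f)) with ht
  have hs0 : 0 ≤ s := Real.sqrt_nonneg _
  have ht0 : 0 ≤ t := Real.sqrt_nonneg _
  have hprod1 : 0 ≤ (1 - a) * f := mul_nonneg (by linarith) hf0
  have hprod2 : 0 ≤ a * (1 - f) := mul_nonneg ha0 (by linarith)
  have hs2 : s ^ 2 = (1 - a) * f := Real.sq_sqrt hprod1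
  have ht2 : t ^ 2 = a * (1 - f) := Real.sq_sqrt hprod2
  have hxpos : 0 < x := lt_of_le_of_lt (abs_nonneg _) hx1
  set e := min s x with he
  set d := x - e with hd
  have he0 : 0 ≤ e := le_min hs0 hxpos.le
  have hes : e ≤ s := min_le_left _ _
  have hd0 : 0 ≤ d := by
    have : e ≤ x := min_le_right _ _
    simp [hd]; linarith
  have hdt : d ≤ t := by
    rcases le_or_gt s x with h | h
    · have : e = s := min_eq_left h
      simp [hd, this]; linarith
    · have : e = x := min_eq_right h.le
      simp [hd, this]; exact ht0
  have hde : d + e = x := by simp [hd]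
  have he2 : e ^ 2 ≤ (1 - a) * f := by
    rw [← hs2]; exact pow_le_pow_left₀ he0 hes 2
  have hd2 : d ^ 2 ≤ a * (1 - f) := by
    rw [← ht2]; exact pow_le_pow_left₀ hd0 hdt 2
  refine ⟨d, e, he2, hd2, ?_, ?_⟩
  · rw [Matrix.posSemidef_iff_dotProduct_mulVec]
    constructor
    · ext i j
      fin_cases i <;> fin_cases j <;>
        simp [Matrix.conjTranspose_apply]
    · intro v
      have key1 : 0 ≤ a * (v 0) ^ 2 + 2 * d * (v 0) * (v 3) + (1 - f) * (v 3) ^ 2 :=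
        quad_aux a (1 - f) d (v 0) (v 3) ha0 (by linarith) hd2
      have key2 : 0 ≤ (1 - a) * (v 1) ^ 2 + 2 * e * (v 1) * (v 2) + f * (v 2) ^ 2 :=
        quad_aux (1 - a) f e (v 1) (v 2) (by linarith) hf0 he2
      simp only [Matrix.mulVec, dotProduct, Fin.sum_univ_four, Matrix.cons_val',
        Matrix.cons_val_zero, Matrix.cons_val_one, Matrix.head_cons, Matrix.empty_val',
        Matrix.cons_val_fin_one, Matrix.cons_val_two, Matrix.tail_cons, Matrix.of_apply,
        Matrix.cons_val_three, Matrix.head_fin_const, RCLike.star_def, starRingEnd_apply,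
        star_trivial, RCLike.re_to_real, Pi.star_apply, Matrix.head_val']
      nlinarith [key1, key2]
  · have habs : |d + e| = x := by rw [hde, abs_of_pos hxpos]
    have h1 : |d - e| ≤ x := by
      rw [← hde]
      rcases abs_cases (d - e) with ⟨h, _⟩ | ⟨h, _⟩ <;> linarith
    rw [habs]
    rw [max_eq_left h1, max_eq_left hx1.le]
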